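/- Let f_1,…,f_r ∈ K[x_1,…,x_n] be homogeneous of degree t, I = ⟨f_1,…,f_r⟩, d ≥ 0, and s ≥ 0. Then I^{(t+d)} contains no nonzero polynomial with at most s terms if and only if for every subset S ⊆ M_{t+d}^n with |S| = |M_{t+d}^n| − s and every β ∈ M_{t+d}^n, the linear form p_β lies in Span{p_α : α ∈ S}, i.e., there exist scalars r_α ∈ K with p_β = ∑_{α∈S} r_α p_α. -/

import Mathlib

/-- The linear form `p_α` extracting the coefficient of `x^α` from the polynomial
expression `∑ i, g i * f i`, viewed as a linear form on the space of `r`-tuples of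
homogeneous polynomials of degree `d`. -/
noncomputable def pForm {K : Type*} [Field K] {n r : ℕ}
    (f : Fin r → MvPolynomial (Fin n) K) (d : ℕ) (α : Fin n →₀ ℕ) :
    (Fin r → ↥(MvPolynomial.homogeneousSubmodule (Fin n) K d)) →ₗ[K] K where
  toFun g := MvPolynomial.coeff α (∑ i, (g i : MvPolynomial (Fin n) K) * f i)
  map_add' g h := by
    simp [add_mul, Finset.sum_add_distrib]
  map_smul' c g := by
    simp [smul_mul_assoc, ← Finset.smul_sum, MvPolynomial.coeff_smul, smul_eq_mul]

open MvPolynomial in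
/-- Multiplying the degree-`d` homogeneous component by a degree-`t` homogeneous polynomial
gives the degree-`t+d` homogeneous component of the product. -/
lemma homogeneousComponent_mul_isHomogeneous {K : Type*} [Field K] {n t d : ℕ}
    {f : MvPolynomial (Fin n) K} (hf : f.IsHomogeneous t) (c : MvPolynomial (Fin n) K) :
    homogeneousComponent (t + d) (c * f) = homogeneousComponent d c * f := by
  induction c using MvPolynomial.induction_on' with
  | monomial β b =>
    have h1 : monomial β b ∈ homogeneousSubmodule (Fin n) K β.degree :=
      isHomogeneous_monomial b rfl
    have h2 : monomial β b * f ∈ homogeneousSubmodule (Fin n) K (β.degree + t) :=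
      ((mem_homogeneousSubmodule _ _).1 h1).mul hf
    rw [homogeneousComponent_of_mem h1, homogeneousComponent_of_mem h2]
    by_cases hd : d = β.degree
    · rw [if_pos (by omega), if_pos hd]
    · rw [if_neg (by omega), if_neg hd, zero_mul]
  | add p q hp hq =>
    rw [add_mul, map_add, map_add, hp, hq, add_mul]

/-- **Lemma 2.8.**  Let `f 1, …, f r` be homogeneous of degree `t`, `I = ⟨f 1, …, f r⟩`,
`d ≥ 0` and `s ≥ 0`.  The vector space `I^{(t+d)}` contains no nonzero polynomial with at
most `s` terms if and only if for every `S ⊆ M_{t+d}^n` with `|S| = |M_{t+d}^n| - s` and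
every `β ∈ M_{t+d}^n`, the linear form `p_β` is a linear combination of the `p_α`, `α ∈ S`,
i.e. `p_β` lies in their span. -/
theorem no_short_polynomial_iff_linear_combination {K : Type*} [Field K] {n r t d s : ℕ}
    (f : Fin r → MvPolynomial (Fin n) K) (hf : ∀ i, (f i).IsHomogeneous t)
    (M : Set (Fin n →₀ ℕ)) (hM : M = {α | (α.sum fun _ e => e) = t + d}) :
    (∀ h : MvPolynomial (Fin n) K, h ∈ Ideal.span (Set.range f) →
        h.IsHomogeneous (t + d) → h.support.card ≤ s → h = 0) ↔
      (∀ S ⊆ M, S.ncard = M.ncard - s → ∀ β ∈ M,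
        pForm f d β ∈ Submodule.span K (pForm f d '' S)) := by
  have hMdeg : M = {α | α.degree = t + d} := by
    rw [hM]
    rfl
  have hMfin : M.Finite := by
    rw [hMdeg]
    exact (Finsupp.finite_of_degree_le (t + d)).subset fun α hα => le_of_eq hα
  have hsuppM : ∀ h : MvPolynomial (Fin n) K, h.IsHomogeneous (t + d) →
      (↑h.support : Set (Fin n →₀ ℕ)) ⊆ M := by
    intro h hh α hα
    rw [hMdeg]
    by_contra hcon
    exact (MvPolynomial.mem_support_iff.1 hα) (hh.coeff_eq_zero hcon)
  constructor
  · intro hA S hSM hScard β hβ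
    haveI : Finite ↥S := (hMfin.subset hSM).to_subtype
    rw [Set.image_eq_range]
    apply mem_span_of_iInf_ker_le_ker
    intro g hg
    simp only [Submodule.mem_iInf, LinearMap.mem_ker] at hg
    set h := ∑ i, (g i : MvPolynomial (Fin n) K) * f i with hh
    have hmem : h ∈ Ideal.span (Set.range f) :=
      Ideal.sum_mem _ fun i _ => Ideal.mul_mem_left _ _ (Ideal.subset_span ⟨i, rfl⟩)
    have hhom : h.IsHomogeneous (t + d) := by
      rw [add_comm t d]
      exact MvPolynomial.IsHomogeneous.sum _ _ _ fun i _ => ((g i).2).mul (hf i)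
    have hsub : (↑h.support : Set (Fin n →₀ ℕ)) ⊆ M \ S := by
      intro α hα
      refine ⟨hsuppM h hhom hα, fun hαS => ?_⟩
      exact (MvPolynomial.mem_support_iff.1 hα) (hg ⟨α, hαS⟩)
    have hcard : h.support.card ≤ s := by
      have h1 : (↑h.support : Set (Fin n →₀ ℕ)).ncard ≤ (M \ S).ncard :=
        Set.ncard_le_ncard hsub hMfin.diff
      rw [Set.ncard_coe_finset, Set.ncard_diff hSM (hMfin.subset hSM), hScard] at h1
      have hs' : S.ncard ≤ M.ncard := Set.ncard_le_ncard hSM hMfin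
      omega
    have h0 : h = 0 := hA h hmem hhom hcard
    rw [LinearMap.mem_ker]
    show MvPolynomial.coeff β h = 0
    rw [h0, MvPolynomial.coeff_zero]
  · intro hB h hmem hhom hcard
    by_contra hne
    obtain ⟨c, hc⟩ := (Ideal.mem_span_range_iff_exists_fun).1 hmem
    set g : Fin r → ↥(MvPolynomial.homogeneousSubmodule (Fin n) K d) := fun i =>
      ⟨MvPolynomial.homogeneousComponent d (c i),
        MvPolynomial.homogeneousComponent_mem d (c i)⟩ with hgdef
    have hgsum : ∑ i, (g i : MvPolynomial (Fin n) K) * f i = h := by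
      calc ∑ i, (g i : MvPolynomial (Fin n) K) * f i
          = ∑ i, MvPolynomial.homogeneousComponent (t + d) (c i * f i) :=
            Finset.sum_congr rfl fun i _ =>
              (homogeneousComponent_mul_isHomogeneous (hf i) (c i)).symm
        _ = MvPolynomial.homogeneousComponent (t + d) (∑ i, c i * f i) := (map_sum _ _ _).symm
        _ = MvPolynomial.homogeneousComponent (t + d) h := by rw [hc]
        _ = h := by rw [MvPolynomial.homogeneousComponent_of_mem hhom, if_pos rfl]
    have hsupp : (↑h.support : Set (Fin n →₀ ℕ)) ⊆ M := hsuppM h hhom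
    have hle : M.ncard - s ≤ (M \ ↑h.support).ncard := by
      rw [Set.ncard_diff hsupp (Set.toFinite _), Set.ncard_coe_finset]
      omega
    obtain ⟨S, hSsub, hScard⟩ := Set.exists_subset_card_eq hle
    obtain ⟨β, hβ⟩ := Finset.nonempty_iff_ne_empty.2
      (fun he => hne (MvPolynomial.support_eq_empty.1 he))
    have hβM : β ∈ M := hsupp hβ
    have hspan := hB S (hSsub.trans Set.diff_subset) hScard β hβM
    have hker : Submodule.span K (pForm f d '' S) ≤ LinearMap.ker (LinearMap.applyₗ g) := by
      rw [Submodule.span_le]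
      rintro φ ⟨α, hαS, rfl⟩
      rw [SetLike.mem_coe, LinearMap.mem_ker]
      show MvPolynomial.coeff α (∑ i, (g i : MvPolynomial (Fin n) K) * f i) = 0
      rw [hgsum]
      exact MvPolynomial.notMem_support_iff.1 (hSsub hαS).2
    have hβ0 : MvPolynomial.coeff β (∑ i, (g i : MvPolynomial (Fin n) K) * f i) = 0 :=
      hker hspan
    rw [hgsum] at hβ0
    exact (MvPolynomial.mem_support_iff.1 hβ) hβ0
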